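/- In the class Av(123,132): 321_n/(n·|Av_n(123,132)|) → 0 and 231_n/(n·|Av_n(123,132)|) → 1/2 as n → ∞. -/

import Mathlib

/-- `ConsecOcc p π i`: the word `π(i) π(i+1) … π(i+r-1)` (positions `0`-indexed)
is order-isomorphic to the pattern word `p 0, …, p (r-1)`. -/
def ConsecOcc {n r : ℕ} (p : Fin r → ℕ) (π : Equiv.Perm (Fin n)) (i : ℕ) : Prop :=
  ∃ h : i + r ≤ n, ∀ j k : Fin r,
    (π ⟨i + j.val, by have := j.isLt; omega⟩ < π ⟨i + k.val, by have := k.isLt; omega⟩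
      ↔ p j < p k)

/-- The number of consecutive occurrences of the pattern `p` in `π`. -/
noncomputable def occCount {n r : ℕ} (p : Fin r → ℕ) (π : Equiv.Perm (Fin n)) : ℕ :=
  Nat.card {i : ℕ // ConsecOcc p π i}

/-- `π` has no consecutive occurrence of any pattern in `ps`. -/
def AvoidsAll {n r : ℕ} (ps : List (Fin r → ℕ)) (π : Equiv.Perm (Fin n)) : Prop :=
  ∀ p ∈ ps, ∀ i, ¬ ConsecOcc p π i

-- Total number of consecutive occurrences of `p` over all size-`n` permutations satisfying `P`.
open scoped Classical in
noncomputable def totOcc {n r : ℕ} (p : Fin r → ℕ) (P : Equiv.Perm (Fin n) → Prop) : ℕ :=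
  ∑ π : Equiv.Perm (Fin n), if P π then occCount p π else 0

/-- The number of size-`n` permutations satisfying `P`. -/
noncomputable def classCard (n : ℕ) (P : Equiv.Perm (Fin n) → Prop) : ℕ :=
  Nat.card {π : Equiv.Perm (Fin n) // P π}

def p123 : Fin 3 → ℕ := ![1,2,3]
def p132 : Fin 3 → ℕ := ![1,3,2]
def p213 : Fin 3 → ℕ := ![2,1,3]
def p231 : Fin 3 → ℕ := ![2,3,1]
def p312 : Fin 3 → ℕ := ![3,1,2]
def p321 : Fin 3 → ℕ := ![3,2,1]

namespace AV

open Finset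

variable {n m : ℕ}

/-- value of π at position i, as ℕ; junk value `n` out of range -/
def pv (π : Equiv.Perm (Fin n)) (i : ℕ) : ℕ := if h : i < n then (π ⟨i, h⟩).val else n

lemma pv_lt (π : Equiv.Perm (Fin n)) {i : ℕ} (h : i < n) : pv π i < n := by
  simp [pv, dif_pos h, (π ⟨i, h⟩).isLt]

lemma pv_eq (π : Equiv.Perm (Fin n)) {i : ℕ} (h : i < n) : pv π i = (π ⟨i, h⟩).val := by
  simp [pv, dif_pos h]

lemma pv_inj (π : Equiv.Perm (Fin n)) {i j : ℕ} (hi : i < n) (hj : j < n)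
    (h : pv π i = pv π j) : i = j := by
  rw [pv_eq π hi, pv_eq π hj] at h
  have := π.injective (Fin.val_injective h)
  simpa using congrArg Fin.val this

lemma pv_ne (π : Equiv.Perm (Fin n)) {i j : ℕ} (hi : i < n) (hj : j < n) (hij : i ≠ j) :
    pv π i ≠ pv π j := fun h => hij (pv_inj π hi hj h)

/-- Avoiding the class {123,132}: every entry (with two successors) exceeds one of them. -/
def Good (π : Equiv.Perm (Fin n)) : Prop :=
  ∀ i, i + 3 ≤ n → pv π (i+1) < pv π i ∨ pv π (i+2) < pv π i

lemma consec3 {p : Fin 3 → ℕ} {π : Equiv.Perm (Fin n)} {i : ℕ} :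
    ConsecOcc p π i ↔ ∃ _ : i + 3 ≤ n, ∀ j k : Fin 3,
      (pv π (i + j.val) < pv π (i + k.val) ↔ p j < p k) := by
  constructor
  · rintro ⟨h, H⟩
    refine ⟨h, fun j k => ?_⟩
    have hj : i + j.val < n := by have := j.isLt; omega
    have hk : i + k.val < n := by have := k.isLt; omega
    rw [pv_eq π hj, pv_eq π hk]
    exact (H j k)
  · rintro ⟨h, H⟩
    refine ⟨h, fun j k => ?_⟩
    have hj : i + j.val < n := by have := j.isLt; omega
    have hk : i + k.val < n := by have := k.isLt; omega
    have := H j k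
    rw [pv_eq π hj, pv_eq π hk] at this
    exact this

lemma occ123_iff {π : Equiv.Perm (Fin n)} {i : ℕ} :
    ConsecOcc p123 π i ↔ i + 3 ≤ n ∧ pv π i < pv π (i+1) ∧ pv π (i+1) < pv π (i+2) := by
  rw [consec3]
  constructor
  · rintro ⟨h, H⟩
    have h1 := H 0 1
    have h2 := H 1 2
    simp [p123] at h1 h2
    exact ⟨h, by simpa using h1, by simpa using h2⟩
  · rintro ⟨h, h1, h2⟩
    refine ⟨h, fun j k => ?_⟩
    fin_cases j <;> fin_cases k <;> simp [p123] <;> omega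

lemma occ132_iff {π : Equiv.Perm (Fin n)} {i : ℕ} :
    ConsecOcc p132 π i ↔ i + 3 ≤ n ∧ pv π i < pv π (i+2) ∧ pv π (i+2) < pv π (i+1) := by
  rw [consec3]
  constructor
  · rintro ⟨h, H⟩
    have h1 := H 0 2
    have h2 := H 2 1
    simp [p132] at h1 h2
    exact ⟨h, by simpa using h1, by simpa using h2⟩
  · rintro ⟨h, h1, h2⟩
    refine ⟨h, fun j k => ?_⟩
    fin_cases j <;> fin_cases k <;> simp [p132] <;> omega

lemma occ321_iff {π : Equiv.Perm (Fin n)} {i : ℕ} :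
    ConsecOcc p321 π i ↔ i + 3 ≤ n ∧ pv π (i+1) < pv π i ∧ pv π (i+2) < pv π (i+1) := by
  rw [consec3]
  constructor
  · rintro ⟨h, H⟩
    have h1 := H 1 0
    have h2 := H 2 1
    simp [p321] at h1 h2
    exact ⟨h, by simpa using h1, by simpa using h2⟩
  · rintro ⟨h, h1, h2⟩
    refine ⟨h, fun j k => ?_⟩
    fin_cases j <;> fin_cases k <;> simp [p321] <;> omega

lemma occ231_iff {π : Equiv.Perm (Fin n)} {i : ℕ} :
    ConsecOcc p231 π i ↔ i + 3 ≤ n ∧ pv π i < pv π (i+1) ∧ pv π (i+2) < pv π i := by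
  rw [consec3]
  constructor
  · rintro ⟨h, H⟩
    have h1 := H 0 1
    have h2 := H 2 0
    simp [p231] at h1 h2
    exact ⟨h, by simpa using h1, by simpa using h2⟩
  · rintro ⟨h, h1, h2⟩
    refine ⟨h, fun j k => ?_⟩
    fin_cases j <;> fin_cases k <;> simp [p231] <;> omega

lemma good_iff {π : Equiv.Perm (Fin n)} : AvoidsAll [p123, p132] π ↔ Good π := by
  constructor
  · intro hAv i h3
    by_contra hcon
    push_neg at hcon
    obtain ⟨hc1, hc2⟩ := hcon
    have hi : i < n := by omega
    have hi1 : i + 1 < n := by omega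
    have hi2 : i + 2 < n := by omega
    have e1 : pv π i < pv π (i+1) :=
      lt_of_le_of_ne hc1 (pv_ne π hi hi1 (by omega))
    have e2 : pv π i < pv π (i+2) :=
      lt_of_le_of_ne hc2 (pv_ne π hi hi2 (by omega))
    rcases lt_or_gt_of_ne (pv_ne π hi1 hi2 (by omega)) with h12 | h21
    · exact hAv p123 (by simp) i (occ123_iff.mpr ⟨h3, e1, h12⟩)
    · exact hAv p132 (by simp) i (occ132_iff.mpr ⟨h3, e2, h21⟩)
  · intro hG p hp i hocc
    simp only [List.mem_cons, List.mem_singleton, List.not_mem_nil, or_false] at hp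
    rcases hp with rfl | rfl
    · obtain ⟨h3, h1, h2⟩ := occ123_iff.mp hocc
      rcases hG i h3 with h | h <;> omega
    · obtain ⟨h3, h1, h2⟩ := occ132_iff.mp hocc
      rcases hG i h3 with h | h <;> omega

end AV

namespace AV
open Finset
variable {n m : ℕ}

/-- 321-occurrence positions (double descents) -/
def s321 (π : Equiv.Perm (Fin n)) : Finset ℕ :=
  (range (n-2)).filter (fun i => pv π (i+1) < pv π i ∧ pv π (i+2) < pv π (i+1))

def s231 (π : Equiv.Perm (Fin n)) : Finset ℕ :=
  (range (n-2)).filter (fun i => pv π i < pv π (i+1) ∧ pv π (i+2) < pv π i)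

lemma mem_s321 {π : Equiv.Perm (Fin n)} {i : ℕ} :
    i ∈ s321 π ↔ ConsecOcc p321 π i := by
  rw [s321, mem_filter, mem_range, occ321_iff]
  constructor
  · rintro ⟨h, h1, h2⟩; exact ⟨by omega, h1, h2⟩
  · rintro ⟨h, h1, h2⟩; exact ⟨by omega, h1, h2⟩

lemma mem_s231 {π : Equiv.Perm (Fin n)} {i : ℕ} :
    i ∈ s231 π ↔ ConsecOcc p231 π i := by
  rw [s231, mem_filter, mem_range, occ231_iff]
  constructor
  · rintro ⟨h, h1, h2⟩; exact ⟨by omega, h1, h2⟩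
  · rintro ⟨h, h1, h2⟩; exact ⟨by omega, h1, h2⟩

lemma natcard_eq_finset {Q : ℕ → Prop} {s : Finset ℕ} (h : ∀ i, Q i ↔ i ∈ s) :
    Nat.card {i // Q i} = s.card := by
  rw [Nat.card_congr (Equiv.subtypeEquivRight h), Nat.card_eq_fintype_card, Fintype.card_coe]

lemma occCount321 (π : Equiv.Perm (Fin n)) : occCount p321 π = (s321 π).card :=
  natcard_eq_finset (fun i => mem_s321.symm)

lemma occCount231 (π : Equiv.Perm (Fin n)) : occCount p231 π = (s231 π).card :=
  natcard_eq_finset (fun i => mem_s231.symm)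

open scoped Classical in
/-- number of Good permutations of size n -/
noncomputable def cG (n : ℕ) : ℕ := (Finset.univ.filter (fun π : Equiv.Perm (Fin n) => Good π)).card

open scoped Classical in
noncomputable def t321 (n : ℕ) : ℕ :=
  ∑ π ∈ Finset.univ.filter (fun π : Equiv.Perm (Fin n) => Good π), (s321 π).card

open scoped Classical in
noncomputable def t231 (n : ℕ) : ℕ :=
  ∑ π ∈ Finset.univ.filter (fun π : Equiv.Perm (Fin n) => Good π), (s231 π).card

lemma classCard_eq : classCard n (AvoidsAll [p123, p132]) = cG n := by
  classical
  rw [classCard, Nat.card_congr (Equiv.subtypeEquivRight (fun π => good_iff)),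
    Nat.card_eq_fintype_card, Fintype.card_subtype, cG]

lemma totOcc321 : totOcc p321 (AvoidsAll (n := n) [p123, p132]) = t321 n := by
  classical
  rw [totOcc, t321, Finset.sum_filter]
  refine Finset.sum_congr rfl fun π _ => ?_
  by_cases h : Good π <;> simp [h, good_iff, occCount321]

lemma totOcc231 : totOcc p231 (AvoidsAll (n := n) [p123, p132]) = t231 n := by
  classical
  rw [totOcc, t231, Finset.sum_filter]
  refine Finset.sum_congr rfl fun π _ => ?_
  by_cases h : Good π <;> simp [h, good_iff, occCount231]

end AV
section part3
namespace AV
open Finset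
variable {n : ℕ}

lemma word_bounds (π : Equiv.Perm (Fin n)) (hG : Good π) :
    2 * (s231 π).card + (s321 π).card ≤ n ∧ n ≤ 2 * (s231 π).card + (s321 π).card + 3 := by
  classical
  set a : ℕ → Prop := fun i => pv π i < pv π (i+1) with ha
  have hnoAA : ∀ i, i + 3 ≤ n → a i → ¬ a (i+1) := by
    intro i h3 h1 h2
    simp only [ha] at h1 h2
    have hE : pv π (i+1+1) = pv π (i+2) := rfl
    rcases hG i h3 with h | h <;> omega
  set A : Finset ℕ := (range (n-2)).filter a with hA
  set B : Finset ℕ := (range (n-2)).filter (fun i => a (i+1)) with hB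
  set D : Finset ℕ := (range (n-2)).filter (fun i => ¬ a i ∧ ¬ a (i+1)) with hD
  have h231 : (s231 π).card = A.card := by
    congr 1
    rw [s231, hA]
    apply Finset.filter_congr
    intro i hi
    rw [mem_range] at hi
    have h3 : i + 3 ≤ n := by omega
    simp only [ha, eq_iff_iff]
    constructor
    · rintro ⟨h1, _⟩; exact h1
    · intro h1
      refine ⟨h1, ?_⟩
      rcases hG i h3 with h | h
      · omega
      · exact h
  have h321 : (s321 π).card = D.card := by
    congr 1
    rw [s321, hD]
    apply Finset.filter_congr
    intro i hi
    rw [mem_range] at hi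
    have hi0 : i < n := by omega
    have hi1 : i + 1 < n := by omega
    have hi2 : i + 2 < n := by omega
    have d1 := pv_ne π hi0 hi1 (by omega)
    have d2 := pv_ne π hi1 hi2 (by omega)
    simp only [ha, eq_iff_iff]
    constructor
    · rintro ⟨h1, h2⟩
      have hE : pv π (i+1+1) = pv π (i+2) := rfl
      exact ⟨by omega, by omega⟩
    · rintro ⟨h1, h2⟩
      have hE : pv π (i+1+1) = pv π (i+2) := rfl
      push_neg at h1 h2
      exact ⟨by omega, by omega⟩
  have hpart : A.card + (B.card + D.card) = n - 2 := by
    have c1 : A.card + ((range (n-2)).filter (fun i => ¬ a i)).card = (range (n-2)).card :=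
      Finset.card_filter_add_card_filter_not (fun i => a i)
    have c2 : (((range (n-2)).filter (fun i => ¬ a i)).filter (fun i => a (i+1))).card
        + (((range (n-2)).filter (fun i => ¬ a i)).filter (fun i => ¬ a (i+1))).card
        = ((range (n-2)).filter (fun i => ¬ a i)).card :=
      Finset.card_filter_add_card_filter_not (fun i => a (i+1))
    have e1 : ((range (n-2)).filter (fun i => ¬ a i)).filter (fun i => a (i+1)) = B := by
      rw [Finset.filter_filter, hB]
      apply Finset.filter_congr
      intro i hi
      rw [mem_range] at hi
      constructor
      · rintro ⟨_, h⟩; exact h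
      · intro h
        refine ⟨?_, h⟩
        intro hai
        exact hnoAA i (by omega) hai h
    have e2 : ((range (n-2)).filter (fun i => ¬ a i)).filter (fun i => ¬ a (i+1)) = D := by
      rw [Finset.filter_filter, hD]
    rw [e1, e2] at c2
    rw [card_range] at c1
    omega
  have hAB : A.card ≤ B.card + 1 := by
    have sub : A ⊆ insert 0 (A.erase 0) := by
      intro x hx
      by_cases hx0 : x = 0
      · simp [hx0]
      · exact Finset.mem_insert_of_mem (Finset.mem_erase.mpr ⟨hx0, hx⟩)
    have h1 : A.card ≤ (A.erase 0).card + 1 :=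
      le_trans (Finset.card_le_card sub) (Finset.card_insert_le _ _)
    have h2 : (A.erase 0).card ≤ B.card := by
      apply Finset.card_le_card_of_injOn (fun i => i - 1)
      · intro i hi
        rw [Finset.mem_coe, Finset.mem_erase, hA, mem_filter, mem_range] at hi
        obtain ⟨hi0, hi1, hi2⟩ := hi
        dsimp only
        rw [Finset.mem_coe, hB, mem_filter, mem_range]
        have : i - 1 + 1 = i := by omega
        rw [this]
        exact ⟨by omega, hi2⟩
      · intro i hi j hj hij
        rw [Finset.mem_coe, Finset.mem_erase] at hi hj
        simp only at hij
        omega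
    omega
  have hBA : B.card ≤ A.card + 1 := by
    have sub : B ⊆ insert (n-3) (B.erase (n-3)) := by
      intro x hx
      by_cases hx0 : x = n-3
      · simp [hx0]
      · exact Finset.mem_insert_of_mem (Finset.mem_erase.mpr ⟨hx0, hx⟩)
    have h1 : B.card ≤ (B.erase (n-3)).card + 1 :=
      le_trans (Finset.card_le_card sub) (Finset.card_insert_le _ _)
    have h2 : (B.erase (n-3)).card ≤ A.card := by
      apply Finset.card_le_card_of_injOn (fun i => i + 1)
      · intro i hi
        rw [Finset.mem_coe, Finset.mem_erase, hB, mem_filter, mem_range] at hi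
        obtain ⟨hi0, hi1, hi2⟩ := hi
        dsimp only
        rw [Finset.mem_coe, hA, mem_filter, mem_range]
        exact ⟨by omega, hi2⟩
      · intro i _ j _ hij
        simp only at hij
        omega
    omega
  omega

end AV
end part3
section part4
namespace AV
open Finset
variable {n m : ℕ}

noncomputable def permOfInj {m : ℕ} (f : Fin m → Fin m) (hf : Function.Injective f) :
    Equiv.Perm (Fin m) := Equiv.ofBijective f (Finite.injective_iff_bijective.mp hf)

lemma permOfInj_apply {m : ℕ} (f : Fin m → Fin m) (hf : Function.Injective f) (k : Fin m) :
    permOfInj f hf k = f k := rfl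

lemma pv_permOfInj {m : ℕ} (f : Fin m → Fin m) (hf : Function.Injective f) {i : ℕ}
    (h : i < m) : pv (permOfInj f hf) i = (f ⟨i, h⟩).val := pv_eq _ h

/-- helper: two perms with equal pv are equal -/
lemma perm_ext_pv {m : ℕ} (π ρ : Equiv.Perm (Fin m)) (h : ∀ i, i < m → pv π i = pv ρ i) :
    π = ρ := by
  apply Equiv.ext
  intro k
  apply Fin.val_injective
  have := h k.val k.isLt
  rwa [pv_eq π k.isLt, pv_eq ρ k.isLt] at this

/-- append a new minimum at the end (all values shifted up) -/
noncomputable def appMin (σ : Equiv.Perm (Fin m)) : Equiv.Perm (Fin (m+1)) :=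
  permOfInj (fun k => if h : k.val < m then ⟨pv σ k.val + 1, by have := pv_lt σ h; omega⟩
    else ⟨0, by omega⟩) (by
      intro k l hkl
      dsimp only at hkl
      split_ifs at hkl with h1 h2 h2 <;> simp only [Fin.mk.injEq] at hkl
      · exact Fin.ext (pv_inj σ h1 h2 (by omega))
      · omega
      · omega
      · have := k.isLt; have := l.isLt; exact Fin.ext (by omega))

lemma pv_appMin_lt (σ : Equiv.Perm (Fin m)) {i : ℕ} (h : i < m) :
    pv (appMin σ) i = pv σ i + 1 := by
  rw [appMin]; refine (pv_permOfInj _ _ (show i < m + 1 by omega)).trans ?_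
  simp [h]

lemma pv_appMin_last (σ : Equiv.Perm (Fin m)) :
    pv (appMin σ) m = 0 := by
  rw [appMin]; refine (pv_permOfInj _ _ (show m < m + 1 by omega)).trans ?_
  simp

lemma good_appMin (σ : Equiv.Perm (Fin m)) (hG : Good σ) : Good (appMin σ) := by
  intro i h3
  rcases Nat.lt_or_ge (i+3) (m+1) with hc | hc
  · have e0 := pv_appMin_lt σ (show i < m by omega)
    have e1 := pv_appMin_lt σ (show i+1 < m by omega)
    have e2 := pv_appMin_lt σ (show i+2 < m by omega)
    rcases hG i (by omega) with h | h <;> omega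
  · -- i + 3 = m + 1, so i + 2 = m
    have e0 := pv_appMin_lt σ (show i < m by omega)
    have hl : i + 2 = m := by omega
    have e2 : pv (appMin σ) (i+2) = 0 := by rw [hl]; exact pv_appMin_last σ
    omega

/-- append (new minimum, value x+1) at the end; other values relabeled -/
noncomputable def appPair (x : Fin (m+1)) (τ : Equiv.Perm (Fin m)) : Equiv.Perm (Fin (m+2)) :=
  permOfInj (fun k =>
    if h : k.val < m then
      (if pv τ k.val < x.val then ⟨pv τ k.val + 1, by have := pv_lt τ h; omega⟩
        else ⟨pv τ k.val + 2, by have := pv_lt τ h; omega⟩)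
    else if k.val = m then ⟨0, by omega⟩ else ⟨x.val + 1, by have := x.isLt; omega⟩) (by
      intro k l hkl
      have hx := x.isLt
      have hk := k.isLt
      have hl := l.isLt
      dsimp only at hkl
      split_ifs at hkl with h1 h2 h3 h4 h5 h6 h7 h8 h9 <;>
        simp only [Fin.mk.injEq] at hkl <;>
        first
          | (exact Fin.ext (pv_inj τ (by assumption) (by assumption) (by omega)))
          | omega
          | (exact Fin.ext (by omega)))

lemma pv_appPair_lt (x : Fin (m+1)) (τ : Equiv.Perm (Fin m)) {i : ℕ} (h : i < m) :
    pv (appPair x τ) i = if pv τ i < x.val then pv τ i + 1 else pv τ i + 2 := by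
  rw [appPair]; refine (pv_permOfInj _ _ (show i < m + 2 by omega)).trans ?_; dsimp only
  split_ifs with h1 <;> simp [h, h1]

lemma pv_appPair_m (x : Fin (m+1)) (τ : Equiv.Perm (Fin m)) :
    pv (appPair x τ) m = 0 := by
  rw [appPair]; refine (pv_permOfInj _ _ (show m < m + 2 by omega)).trans ?_
  simp

lemma pv_appPair_m1 (x : Fin (m+1)) (τ : Equiv.Perm (Fin m)) :
    pv (appPair x τ) (m+1) = x.val + 1 := by
  rw [appPair]; refine (pv_permOfInj _ _ (show m + 1 < m + 2 by omega)).trans ?_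
  simp

lemma good_appPair (x : Fin (m+1)) (τ : Equiv.Perm (Fin m)) (hG : Good τ) :
    Good (appPair x τ) := by
  intro i h3
  rcases Nat.lt_or_ge (i+3) (m+1) with hc | hc
  · -- all three indices < m
    have e0 := pv_appPair_lt x τ (show i < m by omega)
    have e1 := pv_appPair_lt x τ (show i+1 < m by omega)
    have e2 := pv_appPair_lt x τ (show i+2 < m by omega)
    rcases hG i (by omega) with h | h
    · left; rw [e0, e1]; split_ifs <;> omega
    · right; rw [e0, e2]; split_ifs <;> omega
  · rcases Nat.lt_or_ge (i+3) (m+2) with hc2 | hc2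
    · -- i + 3 = m + 1 : positions i, i+1 < m, i+2 = m
      have e0 := pv_appPair_lt x τ (show i < m by omega)
      have e2 : pv (appPair x τ) (i+2) = 0 := by
        rw [show i + 2 = m by omega]; exact pv_appPair_m x τ
      right
      rw [e0, e2]
      split_ifs <;> omega
    · -- i + 3 = m + 2 : positions i < m, i+1 = m, i+2 = m+1
      have hi : i < m := by omega
      have e0 := pv_appPair_lt x τ hi
      have e1 : pv (appPair x τ) (i+1) = 0 := by
        rw [show i + 1 = m by omega]; exact pv_appPair_m x τ
      left
      rw [e0, e1]
      split_ifs <;> omega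

end AV
end part4
section part5
namespace AV
open Finset
variable {n m : ℕ}

lemma pv_pos_ne {m : ℕ} (π : Equiv.Perm (Fin m)) {i k : ℕ} (hi : i < m) (hk : k < m)
    (hik : i ≠ k) (h0 : pv π k = 0) : 1 ≤ pv π i := by
  have := pv_ne π hi hk hik
  omega

/-- delete the final minimum -/
noncomputable def dropMin (π : Equiv.Perm (Fin (m+1))) (hπ : pv π m = 0) :
    Equiv.Perm (Fin m) :=
  permOfInj (fun k => ⟨pv π k.val - 1, by
      have h1 := pv_lt π (show k.val < m+1 by omega)
      have h2 := pv_pos_ne π (show k.val < m+1 by omega) (show m < m+1 by omega)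
        (by omega) hπ
      omega⟩) (by
    intro k l h
    dsimp only at h
    rw [Fin.mk.injEq] at h
    have h2 := pv_pos_ne π (show k.val < m+1 from by omega) (show m < m+1 by omega)
      (by omega) hπ
    have h3 := pv_pos_ne π (show l.val < m+1 from by omega) (show m < m+1 by omega)
      (by omega) hπ
    exact Fin.ext (pv_inj π (show k.val < m+1 by omega) (show l.val < m+1 by omega) (by omega)))

lemma pv_dropMin (π : Equiv.Perm (Fin (m+1))) (hπ : pv π m = 0) {i : ℕ} (h : i < m) :
    pv (dropMin π hπ) i = pv π i - 1 := by
  rw [dropMin]; exact pv_permOfInj _ _ h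

lemma good_dropMin (π : Equiv.Perm (Fin (m+1))) (hπ : pv π m = 0) (hG : Good π) :
    Good (dropMin π hπ) := by
  intro i h3
  have e0 := pv_dropMin π hπ (show i < m by omega)
  have e1 := pv_dropMin π hπ (show i+1 < m by omega)
  have e2 := pv_dropMin π hπ (show i+2 < m by omega)
  have p0 := pv_pos_ne π (show i < m+1 by omega) (show m < m+1 by omega) (by omega) hπ
  have p1 := pv_pos_ne π (show i+1 < m+1 by omega) (show m < m+1 by omega) (by omega) hπ
  have p2 := pv_pos_ne π (show i+2 < m+1 by omega) (show m < m+1 by omega) (by omega) hπ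
  rcases hG i (by omega) with h | h <;> omega

lemma appMin_dropMin (π : Equiv.Perm (Fin (m+1))) (hπ : pv π m = 0) :
    appMin (dropMin π hπ) = π := by
  apply perm_ext_pv
  intro i hi
  rcases Nat.lt_or_ge i m with h | h
  · rw [pv_appMin_lt _ h, pv_dropMin π hπ h]
    have := pv_pos_ne π (show i < m+1 by omega) (show m < m+1 by omega) (by omega) hπ
    omega
  · have : i = m := by omega
    rw [this, pv_appMin_last, hπ]

lemma dropMin_appMin (σ : Equiv.Perm (Fin m)) (h : pv (appMin σ) m = 0) :
    dropMin (appMin σ) h = σ := by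
  apply perm_ext_pv
  intro i hi
  rw [pv_dropMin _ _ hi, pv_appMin_lt _ hi]
  omega

lemma zero_last_or (π : Equiv.Perm (Fin (n+2))) (hG : Good π) :
    pv π (n+1) = 0 ∨ pv π n = 0 := by
  set z : Fin (n+2) := π.symm ⟨0, by omega⟩ with hz
  have h0 : pv π z.val = 0 := by
    rw [pv_eq π z.isLt]
    have : π z = ⟨0, by omega⟩ := by rw [hz]; exact π.apply_symm_apply _
    rw [show (⟨z.val, z.isLt⟩ : Fin (n+2)) = z from Fin.ext rfl, this]
  have hzlt := z.isLt
  have hge : z.val + 3 > n + 2 := by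
    by_contra hcon
    push_neg at hcon
    rcases hG z.val hcon with h | h <;> omega
  rcases Nat.lt_or_ge z.val (n+1) with h | h
  · right; have e : z.val = n := by omega
    rwa [e] at h0
  · left; have e : z.val = n + 1 := by omega
    rwa [e] at h0

lemma dp_facts (π : Equiv.Perm (Fin (m+2))) (h0 : pv π m = 0) {i : ℕ} (hi : i < m) :
    1 ≤ pv π i ∧ pv π i < m + 2 ∧ pv π i ≠ pv π (m+1) := by
  refine ⟨pv_pos_ne π (by omega) (show m < m+2 by omega) (by omega) h0,
    pv_lt π (by omega), pv_ne π (by omega) (by omega) (by omega)⟩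

lemma dpX_facts (π : Equiv.Perm (Fin (m+2))) (h0 : pv π m = 0) :
    1 ≤ pv π (m+1) ∧ pv π (m+1) < m + 2 := by
  refine ⟨pv_pos_ne π (by omega) (show m < m+2 by omega) (by omega) h0, pv_lt π (by omega)⟩

/-- delete the last two entries (min at position m, some value at m+1), relabelling -/
noncomputable def dropPair (π : Equiv.Perm (Fin (m+2))) (h0 : pv π m = 0) :
    Equiv.Perm (Fin m) :=
  permOfInj (fun k => ⟨pv π k.val - 1 - (if pv π (m+1) < pv π k.val then 1 else 0), by
      have hw := dp_facts π h0 k.isLt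
      have hX := dpX_facts π h0
      split_ifs <;> omega⟩) (by
    intro k l h
    dsimp only at h
    rw [Fin.mk.injEq] at h
    have hw := dp_facts π h0 k.isLt
    have hv := dp_facts π h0 l.isLt
    have hX := dpX_facts π h0
    apply Fin.ext
    refine pv_inj π (show k.val < m+2 by omega) (show l.val < m+2 by omega) ?_
    split_ifs at h <;> omega)

lemma pv_dropPair (π : Equiv.Perm (Fin (m+2))) (h0 : pv π m = 0) {i : ℕ} (h : i < m) :
    pv (dropPair π h0) i = pv π i - 1 - (if pv π (m+1) < pv π i then 1 else 0) := by
  rw [dropPair]; exact pv_permOfInj _ _ h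

lemma good_dropPair (π : Equiv.Perm (Fin (m+2))) (h0 : pv π m = 0) (hG : Good π) :
    Good (dropPair π h0) := by
  intro i h3
  have e0 := pv_dropPair π h0 (show i < m by omega)
  have e1 := pv_dropPair π h0 (show i+1 < m by omega)
  have e2 := pv_dropPair π h0 (show i+2 < m by omega)
  have f0 := dp_facts π h0 (show i < m by omega)
  have f1 := dp_facts π h0 (show i+1 < m by omega)
  have f2 := dp_facts π h0 (show i+2 < m by omega)
  have hX := dpX_facts π h0
  rcases hG i (by omega) with h | h
  · left; rw [e0, e1]; split_ifs <;> omega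
  · right; rw [e0, e2]; split_ifs <;> omega

noncomputable def xOf (π : Equiv.Perm (Fin (m+2))) : Fin (m+1) :=
  ⟨pv π (m+1) - 1, by have := pv_lt π (show m+1 < m+2 by omega); omega⟩

lemma appPair_dropPair (π : Equiv.Perm (Fin (m+2))) (h0 : pv π m = 0) :
    appPair (xOf π) (dropPair π h0) = π := by
  apply perm_ext_pv
  intro i hi
  have hX := dpX_facts π h0
  rcases Nat.lt_or_ge i m with h | h
  · rw [pv_appPair_lt _ _ h, pv_dropPair π h0 h]
    have fw := dp_facts π h0 h
    simp only [xOf]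
    split_ifs <;> omega
  · rcases Nat.lt_or_ge i (m+1) with h' | h'
    · rw [show i = m by omega, pv_appPair_m, h0]
    · rw [show i = m + 1 by omega, pv_appPair_m1]
      simp only [xOf]
      omega

lemma xOf_appPair (x : Fin (m+1)) (τ : Equiv.Perm (Fin m)) :
    xOf (appPair x τ) = x := by
  apply Fin.ext
  simp only [xOf, pv_appPair_m1]
  omega

lemma dropPair_appPair (x : Fin (m+1)) (τ : Equiv.Perm (Fin m)) (h0 : pv (appPair x τ) m = 0) :
    dropPair (appPair x τ) h0 = τ := by
  apply perm_ext_pv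
  intro i hi
  rw [pv_dropPair _ _ hi, pv_appPair_m1, pv_appPair_lt _ _ hi]
  have := pv_lt τ hi
  have hx := x.isLt
  split_ifs <;> omega

lemma cG_rec (n : ℕ) : cG (n+2) = cG (n+1) + (n+1) * cG n := by
  classical
  have hsplit :
      ((univ.filter (fun π : Equiv.Perm (Fin (n+2)) => Good π)).filter
          (fun π => pv π (n+1) = 0)).card
        + ((univ.filter (fun π : Equiv.Perm (Fin (n+2)) => Good π)).filter
          (fun π => ¬ pv π (n+1) = 0)).card
        = cG (n+2) :=
    Finset.card_filter_add_card_filter_not _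
  have hA : ((univ.filter (fun π : Equiv.Perm (Fin (n+2)) => Good π)).filter
      (fun π => pv π (n+1) = 0)).card = cG (n+1) := by
    rw [cG]
    refine Finset.card_bij'
      (fun π hπ => dropMin π (Finset.mem_filter.mp hπ).2)
      (fun σ _ => appMin σ) ?_ ?_ ?_ ?_
    · intro π hπ
      rw [Finset.mem_filter] at hπ ⊢
      rw [Finset.mem_filter] at hπ
      exact ⟨Finset.mem_univ _, good_dropMin π hπ.2 hπ.1.2⟩
    · intro σ hσ
      rw [Finset.mem_filter] at hσ ⊢
      rw [Finset.mem_filter]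
      exact ⟨⟨Finset.mem_univ _, good_appMin σ hσ.2⟩, pv_appMin_last σ⟩
    · intro π hπ
      exact appMin_dropMin π _
    · intro σ hσ
      exact dropMin_appMin σ _
  have hB : ((univ.filter (fun π : Equiv.Perm (Fin (n+2)) => Good π)).filter
      (fun π => ¬ pv π (n+1) = 0)).card = (n+1) * cG n := by
    have hcard : ((univ : Finset (Fin (n+1))) ×ˢ
        (univ.filter (fun τ : Equiv.Perm (Fin n) => Good τ))).card = (n+1) * cG n := by
      rw [Finset.card_product, cG, Finset.card_univ, Fintype.card_fin]
    rw [← hcard]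
    have hzero : ∀ π ∈ (univ.filter (fun π : Equiv.Perm (Fin (n+2)) => Good π)).filter
        (fun π => ¬ pv π (n+1) = 0), pv π n = 0 := by
      intro π hπ
      rw [Finset.mem_filter, Finset.mem_filter] at hπ
      rcases zero_last_or π hπ.1.2 with h | h
      · exact absurd h hπ.2
      · exact h
    refine Finset.card_bij'
      (fun π hπ => (xOf π, dropPair π (hzero π hπ)))
      (fun q _ => appPair q.1 q.2) ?_ ?_ ?_ ?_
    · intro π hπ
      have hG : Good π := (Finset.mem_filter.mp (Finset.mem_filter.mp hπ).1).2
      rw [Finset.mem_product]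
      exact ⟨Finset.mem_univ _,
        Finset.mem_filter.mpr ⟨Finset.mem_univ _, good_dropPair π (hzero π hπ) hG⟩⟩
    · intro q hq
      rw [Finset.mem_product, Finset.mem_filter] at hq
      rw [Finset.mem_filter, Finset.mem_filter]
      refine ⟨⟨Finset.mem_univ _, good_appPair q.1 q.2 hq.2.2⟩, ?_⟩
      rw [pv_appPair_m1]
      omega
    · intro π hπ
      exact appPair_dropPair π (hzero π hπ)
    · intro q hq
      exact Prod.ext (xOf_appPair q.1 q.2) (dropPair_appPair q.1 q.2 (pv_appPair_m q.1 q.2))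
  omega

end AV
end part5
section part6
namespace AV
open Finset
variable {n m : ℕ}

/-- insert a new maximum at position p -/
noncomputable def insMax (π : Equiv.Perm (Fin m)) (p : ℕ) (hp : p ≤ m) :
    Equiv.Perm (Fin (m+1)) :=
  permOfInj (fun k =>
    if h1 : k.val < p then ⟨pv π k.val, by have := pv_lt π (show k.val < m by omega); omega⟩
    else if h2 : k.val = p then ⟨m, by omega⟩
    else ⟨pv π (k.val - 1), by
      have hk := k.isLt
      have := pv_lt π (show k.val - 1 < m by omega); omega⟩) (by
    intro k l h
    have hk := k.isLt
    have hl := l.isLt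
    dsimp only at h
    split_ifs at h with h1 h2 h3 h4 h5 h6 h7 h8 <;>
      rw [Fin.mk.injEq] at h <;>
      first
        | (exact Fin.ext (pv_inj π (by omega) (by omega) h))
        | (have := pv_lt π (show k.val < m by omega); omega)
        | (have := pv_lt π (show l.val < m by omega); omega)
        | (have := pv_lt π (show k.val - 1 < m by omega); omega)
        | (have := pv_lt π (show l.val - 1 < m by omega); omega)
        | (exact Fin.ext (by omega))
        | (have h' := pv_inj π (show k.val < m by omega) (show l.val - 1 < m by omega) h;
            omega)
        | (have h' := pv_inj π (show k.val - 1 < m by omega) (show l.val < m by omega) h;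
            omega)
        | (exact Fin.ext (by
            have h' := pv_inj π (show k.val - 1 < m by omega) (show l.val - 1 < m by omega) h
            omega)))

lemma insMax_congr (π : Equiv.Perm (Fin m)) {p q : ℕ} (hpq : p = q) (hp : p ≤ m) (hq : q ≤ m) :
    insMax π p hp = insMax π q hq := by subst hpq; rfl

lemma pv_insMax_lt (π : Equiv.Perm (Fin m)) {p : ℕ} (hp : p ≤ m) {i : ℕ} (h : i < p) :
    pv (insMax π p hp) i = pv π i := by
  rw [insMax]; refine (pv_permOfInj _ _ (show i < m + 1 by omega)).trans ?_
  simp [h]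

lemma pv_insMax_eq (π : Equiv.Perm (Fin m)) {p : ℕ} (hp : p ≤ m) :
    pv (insMax π p hp) p = m := by
  rw [insMax]; refine (pv_permOfInj _ _ (show p < m + 1 by omega)).trans ?_
  simp

lemma pv_insMax_gt (π : Equiv.Perm (Fin m)) {p : ℕ} (hp : p ≤ m) {i : ℕ} (h1 : p < i)
    (h2 : i < m + 1) : pv (insMax π p hp) i = pv π (i - 1) := by
  rw [insMax]; refine (pv_permOfInj _ _ h2).trans ?_
  simp [Nat.not_lt_of_gt h1, Nat.ne_of_gt h1]

lemma good_insMax (π : Equiv.Perm (Fin m)) {i : ℕ} (h3 : i + 3 ≤ m)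
    (h1 : pv π (i+1) < pv π i) (h2 : pv π (i+2) < pv π (i+1)) (hG : Good π)
    (hp : i + 2 ≤ m) : Good (insMax π (i+2) hp) := by
  intro j hj
  rcases Nat.lt_or_ge (j+2) (i+2) with hc | hc
  · have e0 := pv_insMax_lt π hp (show j < i+2 by omega)
    have e1 := pv_insMax_lt π hp (show j+1 < i+2 by omega)
    have e2 := pv_insMax_lt π hp (show j+2 < i+2 by omega)
    rcases hG j (by omega) with h | h <;> omega
  · rcases Nat.lt_or_ge j (i+2) with hc2 | hc2
    · rcases Nat.lt_or_ge (j+1) (i+2) with hc3 | hc3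
      · -- j = i
        have hji : j = i := by omega
        have e0 := pv_insMax_lt π hp (show j < i+2 by omega)
        have e1 := pv_insMax_lt π hp (show j+1 < i+2 by omega)
        left
        rw [e0, e1, hji]
        exact h1
      · -- j = i+1
        have hji : j = i + 1 := by omega
        have e0 := pv_insMax_lt π hp (show j < i+2 by omega)
        have e2 := pv_insMax_gt π hp (show i+2 < j+2 by omega) (by omega)
        right
        rw [e0, e2, hji]
        simpa using h2
    · rcases Nat.lt_or_ge i (j - 2) with hc4 | hc4
      · -- j > i+2
        have e0 := pv_insMax_gt π hp (show i+2 < j by omega) (by omega)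
        have e1 := pv_insMax_gt π hp (show i+2 < j+1 by omega) (by omega)
        have e2 := pv_insMax_gt π hp (show i+2 < j+2 by omega) (by omega)
        rcases hG (j-1) (by omega) with h | h
        · left
          rw [e0, e1, show j + 1 - 1 = j - 1 + 1 by omega]
          exact h
        · right
          rw [e0, e2, show j + 2 - 1 = j - 1 + 2 by omega]
          exact h
      · -- j = i+2
        have hji : j = i + 2 := by omega
        subst hji
        have e0 := pv_insMax_eq π hp
        have e1 := pv_insMax_gt π hp (show i+2 < i+2+1 by omega) (by omega)
        left
        rw [e0, e1]
        have := pv_lt π (show i + 2 + 1 - 1 < m by omega)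
        omega

lemma t321_le (n : ℕ) : t321 n ≤ cG (n+1) := by
  classical
  rw [t321, cG]
  rw [← Finset.card_sigma]
  apply Finset.card_le_card_of_injOn
    (fun q => insMax q.1 (min (q.2+2) n) (min_le_right _ _))
  · -- maps to Good
    rintro ⟨π, i⟩ hq
    simp only [Finset.mem_coe, Finset.mem_sigma] at hq
    obtain ⟨hπ, hi⟩ := hq
    have hG : Good π := (Finset.mem_filter.mp hπ).2
    rw [s321, Finset.mem_filter, Finset.mem_range] at hi
    obtain ⟨hilt, hd1, hd2⟩ := hi
    dsimp only at hilt hd1 hd2 ⊢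
    have h3 : i + 3 ≤ n := by omega
    have hmin : min (i+2) n = i + 2 := by omega
    rw [Finset.mem_coe, Finset.mem_filter]
    refine ⟨Finset.mem_univ _, ?_⟩
    rw [insMax_congr π hmin (min_le_right _ _) (by omega)]
    exact good_insMax π h3 hd1 hd2 hG (by omega)
  · -- injective
    rintro ⟨π, i⟩ hq ⟨π', i'⟩ hq' heq
    simp only [Finset.mem_coe, Finset.mem_sigma] at hq hq'
    obtain ⟨hπ, hi⟩ := hq
    obtain ⟨hπ', hi'⟩ := hq'
    rw [s321, Finset.mem_filter, Finset.mem_range] at hi hi'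
    obtain ⟨hilt, hd1, hd2⟩ := hi
    obtain ⟨hilt', hd1', hd2'⟩ := hi'
    dsimp only at hilt hd1 hd2 hilt' hd1' hd2' heq
    have hmin : min (i+2) n = i + 2 := by omega
    have hmin' : min (i'+2) n = i' + 2 := by omega
    have hp : i + 2 ≤ n := by omega
    have hp' : i' + 2 ≤ n := by omega
    rw [insMax_congr π hmin (min_le_right _ _) hp,
      insMax_congr π' hmin' (min_le_right _ _) hp'] at heq
    have hpv : ∀ j, pv (insMax π (i+2) hp) j = pv (insMax π' (i'+2) hp') j := by
      intro j; rw [heq]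
    have hii : i = i' := by
      by_contra hne
      rcases Nat.lt_or_ge i i' with hlt | hge
      · have l1 := hpv (i+2)
        rw [pv_insMax_eq π hp, pv_insMax_lt π' hp' (show i+2 < i'+2 by omega)] at l1
        have := pv_lt π' (show i + 2 < n by omega)
        omega
      · have l1 := hpv (i'+2)
        rw [pv_insMax_eq π' hp', pv_insMax_lt π hp (show i'+2 < i+2 by omega)] at l1
        have := pv_lt π (show i' + 2 < n by omega)
        omega
    subst hii
    have hππ : π = π' := by
      apply perm_ext_pv
      intro k hk
      rcases Nat.lt_or_ge k (i+2) with h | h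
      · have l1 := hpv k
        rwa [pv_insMax_lt π hp h, pv_insMax_lt π' hp' h] at l1
      · have l1 := hpv (k+1)
        rw [pv_insMax_gt π hp (by omega) (by omega),
          pv_insMax_gt π' hp' (by omega) (by omega)] at l1
        simpa using l1
    subst hππ
    rfl

end AV
end part6
section part7
namespace AV
open Finset
variable {n m : ℕ}

lemma good_of_le2 (h : n ≤ 2) (π : Equiv.Perm (Fin n)) : Good π :=
  fun _ h3 => absurd h3 (by omega)

lemma cG0 : cG 0 = 1 := by
  classical
  rw [cG, Finset.filter_true_of_mem (fun π _ => good_of_le2 (by omega) π), Finset.card_univ]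
  simp [Fintype.card_perm]

lemma cG1 : cG 1 = 1 := by
  classical
  rw [cG, Finset.filter_true_of_mem (fun π _ => good_of_le2 (by omega) π), Finset.card_univ]
  simp [Fintype.card_perm]

lemma good_revPerm : Good (Fin.revPerm : Equiv.Perm (Fin n)) := by
  intro i h3
  have e : ∀ j, j < n → pv (Fin.revPerm : Equiv.Perm (Fin n)) j = n - (j + 1) := by
    intro j hj
    rw [pv_eq _ hj]
    simp [Fin.rev]
  rw [e i (by omega), e (i+1) (by omega)]
  left; omega

lemma cG_pos (n : ℕ) : 0 < cG n := by
  classical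
  rw [cG]
  apply Finset.card_pos.mpr
  exact ⟨Fin.revPerm, Finset.mem_filter.mpr ⟨Finset.mem_univ _, good_revPerm⟩⟩

lemma cG_le_succ (n : ℕ) : cG n ≤ cG (n+1) := by
  cases n with
  | zero => rw [cG0, cG1]
  | succ m =>
    calc cG (m+1) ≤ cG (m+1) + (m+1) * cG m := Nat.le_add_right _ _
      _ = cG (m+2) := (cG_rec m).symm

lemma sum_bounds (n : ℕ) :
    2 * t231 n + t321 n ≤ n * cG n ∧ n * cG n ≤ 2 * t231 n + t321 n + 3 * cG n := by
  classical
  have key1 : ∀ π ∈ Finset.univ.filter (fun π : Equiv.Perm (Fin n) => Good π),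
      2 * (s231 π).card + (s321 π).card ≤ n :=
    fun π hπ => (word_bounds π (Finset.mem_filter.mp hπ).2).1
  have key2 : ∀ π ∈ Finset.univ.filter (fun π : Equiv.Perm (Fin n) => Good π),
      n ≤ 2 * (s231 π).card + (s321 π).card + 3 :=
    fun π hπ => (word_bounds π (Finset.mem_filter.mp hπ).2).2
  constructor
  · rw [t231, t321, cG]
    rw [Finset.mul_sum, ← Finset.sum_add_distrib]
    calc (∑ π ∈ Finset.univ.filter (fun π : Equiv.Perm (Fin n) => Good π),
          (2 * (s231 π).card + (s321 π).card))
        ≤ ∑ _π ∈ Finset.univ.filter (fun π : Equiv.Perm (Fin n) => Good π), n :=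
          Finset.sum_le_sum key1
      _ = _ := by rw [Finset.sum_const, smul_eq_mul, mul_comm]
  · rw [t231, t321, cG]
    rw [Finset.mul_sum, ← Finset.sum_add_distrib]
    have : (3 : ℕ) * (Finset.univ.filter (fun π : Equiv.Perm (Fin n) => Good π)).card
        = ∑ _π ∈ Finset.univ.filter (fun π : Equiv.Perm (Fin n) => Good π), 3 := by
      rw [Finset.sum_const, smul_eq_mul, mul_comm]
    rw [this, ← Finset.sum_add_distrib]
    calc (n * (Finset.univ.filter (fun π : Equiv.Perm (Fin n) => Good π)).card)
        = ∑ _π ∈ Finset.univ.filter (fun π : Equiv.Perm (Fin n) => Good π), n := by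
          rw [Finset.sum_const, smul_eq_mul, mul_comm]
      _ ≤ _ := Finset.sum_le_sum key2

lemma sqrt4 : Real.sqrt 4 = 2 := by
  rw [show (4:ℝ) = 2^2 by norm_num, Real.sqrt_sq (by norm_num)]

lemma sqrtB : ∀ n : ℕ, Real.sqrt (n+1) * (cG n : ℝ) ≤ 2 * (cG (n+1) : ℝ) := by
  intro n
  induction n using Nat.strong_induction_on with
  | _ n IH =>
    rcases le_or_gt (Real.sqrt (n+1)) 2 with hc | hc
    · -- trivial case
      have hmono : (cG n : ℝ) ≤ cG (n+1) := by exact_mod_cast cG_le_succ n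
      have h0 : (0:ℝ) ≤ cG n := by positivity
      nlinarith [Real.sqrt_nonneg ((n:ℝ)+1)]
    · -- n ≥ 4
      have hn4 : 4 ≤ n := by
        by_contra hcon
        push_neg at hcon
        have h1 : ((n:ℝ)+1) ≤ 4 := by
          have h2 : (n:ℝ) ≤ 3 := by exact_mod_cast Nat.le_of_lt_succ hcon
          linarith
        have h3 := Real.sqrt_le_sqrt h1
        rw [sqrt4] at h3
        linarith
      obtain ⟨m, rfl⟩ : ∃ m, n = m + 4 := ⟨n - 4, by omega⟩
      push_cast at hc ⊢
      have rec1 : (cG (m+5) : ℝ) = cG (m+4) + ((m:ℝ)+4) * cG (m+3) := by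
        have := cG_rec (m+3)
        push_cast [this]
        ring
      have rec2 : (cG (m+4) : ℝ) = cG (m+3) + ((m:ℝ)+3) * cG (m+2) := by
        have := cG_rec (m+2)
        push_cast [this]
        ring
      have IH2 := IH (m+2) (by omega)
      push_cast at IH2
      rw [show cG (m+2+1) = cG (m+3) from congrArg cG (by omega)] at IH2
      set a := Real.sqrt ((m:ℝ)+4+1) with hadef
      set b := Real.sqrt ((m:ℝ)+2+1) with hbdef
      have ha0 : 0 ≤ a := Real.sqrt_nonneg _
      have hb0 : 0 ≤ b := Real.sqrt_nonneg _
      have hbb : b * b = (m:ℝ)+3 := by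
        rw [hbdef, Real.mul_self_sqrt (by positivity)]
        ring
      have hstar : (cG (m+4) : ℝ) ≤ (1 + 2*b) * cG (m+3) := by
        have s1 : b * (b * (cG (m+2):ℝ)) ≤ b * (2 * cG (m+3)) :=
          mul_le_mul_of_nonneg_left IH2 hb0
        have e : ((m:ℝ)+3) * cG (m+2) = b * (b * (cG (m+2):ℝ)) := by rw [← hbb]; ring
        linarith [s1, rec2, e]
      have hab : a * b ≤ (m:ℝ) + 4 := by
        have e : a * b = Real.sqrt (((m:ℝ)+4+1) * ((m:ℝ)+2+1)) :=
          (Real.sqrt_mul (by positivity) _).symm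
        rw [e]
        have : (((m:ℝ)+4+1) * ((m:ℝ)+2+1)) ≤ ((m:ℝ)+4)^2 := by nlinarith
        calc Real.sqrt (((m:ℝ)+4+1) * ((m:ℝ)+2+1)) ≤ Real.sqrt (((m:ℝ)+4)^2) :=
              Real.sqrt_le_sqrt this
          _ = (m:ℝ)+4 := Real.sqrt_sq (by positivity)
      have ha2b : a ≤ 2 * b := by
        have e : Real.sqrt (4 * ((m:ℝ)+2+1)) = 2 * b := by
          rw [Real.sqrt_mul (by norm_num) _, sqrt4, hbdef]
        calc a ≤ Real.sqrt (4 * ((m:ℝ)+2+1)) := Real.sqrt_le_sqrt (by nlinarith)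
          _ = 2 * b := e
      -- main computation
      have hgoal : a * (cG (m+4):ℝ) ≤ 2 * cG (m+5) := by
        have step1 : (a - 2) * (cG (m+4):ℝ) ≤ (a-2) * ((1 + 2*b) * cG (m+3)) :=
          mul_le_mul_of_nonneg_left hstar (by linarith)
        have step3 : (a-2) * (1+2*b) ≤ 2*((m:ℝ)+4) := by nlinarith
        have step4 : (a-2) * ((1 + 2*b) * (cG (m+3):ℝ)) ≤ 2*((m:ℝ)+4) * cG (m+3) := by
          have h0 : (0:ℝ) ≤ cG (m+3) := by positivity
          calc (a-2) * ((1 + 2*b) * (cG (m+3):ℝ)) = ((a-2)*(1+2*b)) * cG (m+3) := by ring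
            _ ≤ 2*((m:ℝ)+4) * cG (m+3) := mul_le_mul_of_nonneg_right step3 h0
        rw [rec1]
        nlinarith [cG_pos (m+4)]
      rw [show cG (m+4+1) = cG (m+5) from congrArg cG (by omega)]
      exact hgoal

end AV
end part7
section part8
namespace AV
open Finset Filter

lemma cGR_pos (n : ℕ) : (0:ℝ) < (cG n : ℝ) := by exact_mod_cast cG_pos n

noncomputable def X (n : ℕ) : ℝ := (t321 n : ℝ) / ((n:ℝ) * (cG n : ℝ))
noncomputable def Y (n : ℕ) : ℝ := (t231 n : ℝ) / ((n:ℝ) * (cG n : ℝ))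

lemma X_nonneg (n : ℕ) : 0 ≤ X n := by
  apply div_nonneg (by positivity) (by positivity)

lemma X_bound : ∀ n : ℕ, 1 ≤ n → X n ≤ (1 + 2*Real.sqrt n)/(n:ℝ) := by
  intro n hn
  obtain ⟨m, rfl⟩ : ∃ m, n = m + 1 := ⟨n - 1, by omega⟩
  rw [X]
  push_cast
  set s := Real.sqrt ((m:ℝ)+1) with hs
  have hs0 : 0 ≤ s := Real.sqrt_nonneg _
  have hss : s * s = (m:ℝ)+1 := Real.mul_self_sqrt (by positivity)
  have hrec : (cG (m+2) : ℝ) = cG (m+1) + ((m:ℝ)+1) * cG m := by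
    have := cG_rec m
    push_cast [this]
    ring
  have hle : (t321 (m+1) : ℝ) ≤ cG (m+2) := by exact_mod_cast t321_le (m+1)
  have hsb : s * (cG m : ℝ) ≤ 2 * cG (m+1) := sqrtB m
  have hKey : (t321 (m+1) : ℝ) ≤ (1 + 2*s) * cG (m+1) := by
    have h1 : ((m:ℝ)+1) * cG m = s * (s * cG m) := by rw [← hss]; ring
    have h2 : s * (s * (cG m:ℝ)) ≤ s * (2 * cG (m+1)) :=
      mul_le_mul_of_nonneg_left hsb hs0
    nlinarith
  have hD : (0:ℝ) < ((m:ℝ)+1) * cG (m+1) := by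
    have := cGR_pos (m+1); positivity
  rw [div_le_div_iff₀ hD (by positivity : (0:ℝ) < (m:ℝ)+1)]
  nlinarith [mul_le_mul_of_nonneg_right hKey (show (0:ℝ) ≤ (m:ℝ)+1 by positivity),
    cGR_pos (m+1)]

lemma Y_ub : ∀ n : ℕ, 1 ≤ n → Y n ≤ 1/2 := by
  intro n hn
  have hD : (0:ℝ) < (n:ℝ) * cG n := by
    have h1 : (0:ℝ) < (n:ℝ) := by exact_mod_cast hn
    have := cGR_pos n; positivity
  rw [Y, div_le_iff₀ hD]
  have hs1 : 2*(t231 n:ℝ) + t321 n ≤ (n:ℝ) * cG n := by exact_mod_cast (sum_bounds n).1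
  have h0 : (0:ℝ) ≤ t321 n := by positivity
  linarith

lemma Y_lb : ∀ n : ℕ, 1 ≤ n → 1/2 - 3/(2*(n:ℝ)) - X n / 2 ≤ Y n := by
  intro n hn
  have hn0 : (0:ℝ) < (n:ℝ) := by exact_mod_cast hn
  have hD : (0:ℝ) < (n:ℝ) * cG n := by have := cGR_pos n; positivity
  have hs2 : (n:ℝ) * cG n ≤ 2*(t231 n:ℝ) + t321 n + 3 * cG n := by
    exact_mod_cast (sum_bounds n).2
  rw [Y, le_div_iff₀ hD]
  have eX : X n * ((n:ℝ)*cG n) = (t321 n : ℝ) := div_mul_cancel₀ _ hD.ne'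
  have e1 : 3/(2*(n:ℝ)) * ((n:ℝ)*cG n) = 3 * (cG n : ℝ) / 2 := by
    field_simp
  have expand : (1/2 - 3/(2*(n:ℝ)) - X n/2) * ((n:ℝ)*cG n)
      = (1/2)*((n:ℝ)*cG n) - (3/(2*(n:ℝ)))*((n:ℝ)*cG n) - (1/2)*(X n*((n:ℝ)*cG n)) := by
    ring
  rw [expand, eX, e1]
  linarith

lemma sqrt_tendsto : Tendsto (fun n : ℕ => Real.sqrt n) atTop atTop := by
  apply Filter.tendsto_atTop_atTop.mpr
  intro b
  refine ⟨⌈b⌉₊^2, fun n hn => ?_⟩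
  have h1 : (((⌈b⌉₊:ℕ)^2 : ℕ) : ℝ) ≤ (n:ℝ) := by exact_mod_cast hn
  have h2 : b ≤ (⌈b⌉₊:ℝ) := Nat.le_ceil b
  calc b ≤ (⌈b⌉₊:ℝ) := h2
    _ = Real.sqrt ((⌈b⌉₊:ℝ)^2) := (Real.sqrt_sq (by positivity)).symm
    _ ≤ Real.sqrt n := Real.sqrt_le_sqrt (by push_cast at h1 ⊢; linarith)

lemma G_tendsto : Tendsto (fun n : ℕ => (1 + 2*Real.sqrt n)/(n:ℝ)) atTop (nhds 0) := by
  have h1 : Tendsto (fun n : ℕ => 1/(n:ℝ) + 2/Real.sqrt n) atTop (nhds 0) := by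
    have ha : Tendsto (fun n : ℕ => 1/(n:ℝ)) atTop (nhds 0) :=
      tendsto_one_div_atTop_nhds_zero_nat
    have hb : Tendsto (fun n : ℕ => 2/Real.sqrt n) atTop (nhds 0) :=
      Tendsto.div_atTop tendsto_const_nhds sqrt_tendsto
    simpa using ha.add hb
  apply Tendsto.congr' _ h1
  filter_upwards [eventually_ge_atTop 1] with n hn
  have hn0 : (0:ℝ) < (n:ℝ) := by exact_mod_cast hn
  have hs0 : (0:ℝ) < Real.sqrt n := Real.sqrt_pos.mpr hn0
  have hss : Real.sqrt n * Real.sqrt n = (n:ℝ) := Real.mul_self_sqrt (le_of_lt hn0)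
  field_simp
  linear_combination (-2:ℝ) * hss

lemma X_tendsto : Tendsto X atTop (nhds 0) := by
  apply squeeze_zero' (Eventually.of_forall X_nonneg) _ G_tendsto
  filter_upwards [eventually_ge_atTop 1] with n hn
  exact X_bound n hn

lemma Y_tendsto : Tendsto Y atTop (nhds (1/2)) := by
  have h3n : Tendsto (fun n : ℕ => 3/(2*(n:ℝ))) atTop (nhds 0) :=
    Tendsto.div_atTop tendsto_const_nhds
      (Tendsto.const_mul_atTop (by norm_num : (0:ℝ) < 2) tendsto_natCast_atTop_atTop)
  have hL : Tendsto (fun n : ℕ => 1/2 - 3/(2*(n:ℝ)) - X n / 2) atTop (nhds (1/2)) := by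
    have := (tendsto_const_nhds (x := (1/2 : ℝ)) (f := atTop (α := ℕ))).sub h3n
    have h2 := this.sub (X_tendsto.div_const 2)
    simpa using h2
  apply tendsto_of_tendsto_of_tendsto_of_le_of_le' hL tendsto_const_nhds
  · filter_upwards [eventually_ge_atTop 1] with n hn
    exact Y_lb n hn
  · filter_upwards [eventually_ge_atTop 1] with n hn
    exact Y_ub n hn

end AV
end part8


theorem stmt9 :
    Filter.Tendsto (fun n : ℕ =>
        (totOcc p321 (AvoidsAll (n := n) [p123, p132]) : ℝ)
          / (n * classCard n (AvoidsAll [p123, p132])))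
      Filter.atTop (nhds 0)
    ∧ Filter.Tendsto (fun n : ℕ =>
        (totOcc p231 (AvoidsAll (n := n) [p123, p132]) : ℝ)
          / (n * classCard n (AvoidsAll [p123, p132])))
      Filter.atTop (nhds (1 / 2)) := by
  constructor
  · have hfun : (fun n : ℕ =>
        (totOcc p321 (AvoidsAll (n := n) [p123, p132]) : ℝ)
          / (n * classCard n (AvoidsAll [p123, p132]))) = AV.X := by
      funext n
      rw [AV.totOcc321, AV.classCard_eq, AV.X]
    rw [hfun]
    exact AV.X_tendsto
  · have hfun : (fun n : ℕ =>
        (totOcc p231 (AvoidsAll (n := n) [p123, p132]) : ℝ)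
          / (n * classCard n (AvoidsAll [p123, p132]))) = AV.Y := by
      funext n
      rw [AV.totOcc231, AV.classCard_eq, AV.Y]
    rw [hfun]
    exact AV.Y_tendsto
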